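/- Let F be a finite set of automorphisms of T. Suppose there exist contracting self-similar subgroups G₁, G₂ of Aut(T) and finite subsets H₁ ⊆ G₁, H₂ ⊆ G₂ such that for every g ∈ F and every letter x ∈ X there exist h₁ ∈ H₁, h₂ ∈ H₂ and g' ∈ F with g|_x = h₁·g'·h₂. Then every automorphism in F is finite-state. -/

import Mathlib

open List

/-- Vertices of the rooted `d`-ary tree `T`: finite words over the alphabet
`X = Fin d`. -/
abbrev Vertex (d : ℕ) := List (Fin d)

/-- `g` is an automorphism of the rooted `d`-ary tree: a bijection of the
vertex set `X*` preserving word length and the prefix relation. -/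
def IsTreeAut {d : ℕ} (g : Equiv.Perm (Vertex d)) : Prop :=
  (∀ v : Vertex d, (g v).length = v.length) ∧
    ∀ v w : Vertex d, g v <+: g (v ++ w)

theorem IsTreeAut.prefix_mono {d : ℕ} {g : Equiv.Perm (Vertex d)} (hg : IsTreeAut g)
    {u u' : Vertex d} (h : u <+: u') : g u <+: g u' := by
  obtain ⟨t, rfl⟩ := h
  exact hg.2 u t

/-- The automorphism group `Aut(T)` of the rooted `d`-ary tree, as a subgroup
of the group of permutations of the vertex set. -/
def treeAut (d : ℕ) : Subgroup (Equiv.Perm (Vertex d)) where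
  carrier := {g | IsTreeAut g}
  one_mem' := ⟨fun _ => rfl, fun v w => ⟨w, rfl⟩⟩
  mul_mem' := by
    intro g h hg hh
    obtain ⟨hg1, hg2⟩ := hg
    obtain ⟨hh1, hh2⟩ := hh
    refine ⟨fun v => ?_, fun v w => ?_⟩
    · simp [Equiv.Perm.mul_apply, hg1, hh1]
    · obtain ⟨t, ht⟩ := hh2 v w
      simp only [Equiv.Perm.mul_apply]
      rw [← ht]
      exact hg2 (h v) t
  inv_mem' := by
    intro g hgmem
    obtain ⟨hg1, hg2⟩ := hgmem
    have hg : IsTreeAut g := ⟨hg1, hg2⟩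
    have hlen' : ∀ v : Vertex d, (g⁻¹ v).length = v.length := by
      intro v
      conv_rhs => rw [(Equiv.Perm.inv_eq_iff_eq.mp rfl : v = g (g⁻¹ v))]
      rw [hg1]
    refine ⟨hlen', fun v w => ?_⟩
    have hle : (g⁻¹ v).length ≤ (g⁻¹ (v ++ w)).length := by
      have h1 := hlen' v
      have h2 := hlen' (v ++ w)
      rw [List.length_append] at h2
      omega
    have htp : (g⁻¹ (v ++ w)).take (g⁻¹ v).length <+: g⁻¹ (v ++ w) :=
      List.take_prefix _ _
    have hgtp : g ((g⁻¹ (v ++ w)).take (g⁻¹ v).length) <+: v ++ w := by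
      have := hg.prefix_mono htp
      rwa [(Equiv.Perm.inv_eq_iff_eq.mp rfl : v ++ w = g (g⁻¹ (v ++ w))).symm] at this
    have hlen_tp : (g ((g⁻¹ (v ++ w)).take (g⁻¹ v).length)).length = v.length := by
      rw [hg1, List.length_take, min_eq_left hle, hlen' v]
    have hveq : g ((g⁻¹ (v ++ w)).take (g⁻¹ v).length) = v := by
      have h1 := List.prefix_iff_eq_take.mp hgtp
      have h2 := List.prefix_iff_eq_take.mp (List.prefix_append v w)
      rw [h1, hlen_tp]
      exact h2.symm
    have hkey : (g⁻¹ (v ++ w)).take (g⁻¹ v).length = g⁻¹ v := by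
      apply g.injective
      rw [hveq, (Equiv.Perm.inv_eq_iff_eq.mp rfl : v = g (g⁻¹ v)).symm]
    rw [← hkey]
    exact htp

open scoped Classical in
/-- The state (section) `g|_v` of `g` at the vertex `v` : the unique
automorphism satisfying `g (v ++ w) = g v ++ (g|_v) w` for all `w`. -/
noncomputable def state {d : ℕ} (g : Equiv.Perm (Vertex d)) (v : Vertex d) :
    Equiv.Perm (Vertex d) :=
  if h : Function.Bijective (fun w : Vertex d => (g (v ++ w)).drop v.length) then
    Equiv.ofBijective _ h
  else 1

/-- A finite-state automorphism: one having finitely many states.  The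
finite-state automorphisms form the group `F(X)`. -/
def FiniteState {d : ℕ} (g : Equiv.Perm (Vertex d)) : Prop :=
  (Set.range fun v : Vertex d => state g v).Finite

/-- The cardinality of the orbit `Orb_a(v)` of the vertex `v` under the cyclic
group generated by `a`. -/
noncomputable def orbitCard {d : ℕ} (a : Equiv.Perm (Vertex d)) (v : Vertex d) : ℕ :=
  Nat.card (Set.range fun n : ℤ => (a ^ n) v)

/-- The orbit-signalizer `OS(a) = { a^m|_v : v ∈ X^*, m = |Orb_a(v)| }`. -/
noncomputable def OS {d : ℕ} (a : Equiv.Perm (Vertex d)) : Set (Equiv.Perm (Vertex d)) :=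
  {s | ∃ v : Vertex d, s = state (a ^ orbitCard a v) v}

/-- `a` has finite orbit-signalizer. -/
def FiniteOS {d : ℕ} (a : Equiv.Perm (Vertex d)) : Prop := (OS a).Finite

/-- A self-similar (state-closed) subgroup. -/
def SelfSimilar {d : ℕ} (G : Subgroup (Equiv.Perm (Vertex d))) : Prop :=
  ∀ g ∈ G, ∀ v : Vertex d, state g v ∈ G

/-- A contracting group: there is a finite set `N ⊆ G` such that every
`g ∈ G` has all its states in `N` from some level on. -/
def ContractingGroup {d : ℕ} (G : Subgroup (Equiv.Perm (Vertex d))) : Prop :=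
  ∃ N : Set (Equiv.Perm (Vertex d)), N.Finite ∧ N ⊆ (G : Set (Equiv.Perm (Vertex d))) ∧
    ∀ g ∈ G, ∃ n : ℕ, ∀ v : Vertex d, n ≤ v.length → state g v ∈ N

/-- A contracting automorphism: the self-similar group generated by all of its
states is contracting. -/
def ContractingAut {d : ℕ} (f : Equiv.Perm (Vertex d)) : Prop :=
  ContractingGroup (Subgroup.closure (Set.range fun v : Vertex d => state f v))

/-- The activity sequence `θ_k(g)`: the number of vertices `v` of level `k`
whose state `g|_v` acts nontrivially on the first level `X`. -/
noncomputable def theta {d : ℕ} (g : Equiv.Perm (Vertex d)) (k : ℕ) : ℕ :=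
  Nat.card {v : Vertex d // v.length = k ∧ ∃ x : Fin d, state g v [x] ≠ [x]}

/-- A bounded automorphism: a finite-state automorphism with bounded activity
sequence.  The bounded automorphisms form the group `Pol(0)`. -/
def BoundedAut {d : ℕ} (g : Equiv.Perm (Vertex d)) : Prop :=
  FiniteState g ∧ ∃ C : ℕ, ∀ k : ℕ, theta g k ≤ C

/-- A polynomial automorphism (an element of `Pol(∞)`): a finite-state
automorphism whose activity sequence is polynomially bounded. -/
def PolyAut {d : ℕ} (g : Equiv.Perm (Vertex d)) : Prop :=
  FiniteState g ∧ ∃ p : Polynomial ℕ, ∀ k : ℕ, theta g k ≤ p.eval k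

/-- A finitary automorphism (an element of `Pol(-1)`): all states at some
level are trivial. -/
def Finitary {d : ℕ} (g : Equiv.Perm (Vertex d)) : Prop :=
  ∃ k : ℕ, ∀ v : Vertex d, v.length = k → state g v = 1

/-- A functionally recursive automorphism: a member of some finitely generated
self-similar subgroup of `Aut(T)`.  These form the group `FR(X)`. -/
def FunctionallyRecursive {d : ℕ} (g : Equiv.Perm (Vertex d)) : Prop :=
  ∃ G : Subgroup (Equiv.Perm (Vertex d)), G ≤ treeAut d ∧ SelfSimilar G ∧
    (∃ S : Set (Equiv.Perm (Vertex d)), S.Finite ∧ G = Subgroup.closure S) ∧ g ∈ G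
section Aux

variable {d : ℕ}

lemma perm_apply_inv_self' (g : Equiv.Perm (Vertex d)) (x : Vertex d) : g (g⁻¹ x) = x :=
  Equiv.apply_symm_apply g x

lemma perm_inv_apply_self' (g : Equiv.Perm (Vertex d)) (x : Vertex d) : g⁻¹ (g x) = x :=
  Equiv.symm_apply_apply g x

lemma mem_treeAut_iff {g : Equiv.Perm (Vertex d)} : g ∈ treeAut d ↔ IsTreeAut g := Iff.rfl

lemma IsTreeAut.inv' {g : Equiv.Perm (Vertex d)} (hg : IsTreeAut g) : IsTreeAut g⁻¹ :=
  mem_treeAut_iff.mp ((treeAut d).inv_mem (mem_treeAut_iff.mpr hg))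

lemma IsTreeAut.mul' {g h : Equiv.Perm (Vertex d)} (hg : IsTreeAut g) (hh : IsTreeAut h) :
    IsTreeAut (g * h) :=
  mem_treeAut_iff.mp ((treeAut d).mul_mem (mem_treeAut_iff.mpr hg) (mem_treeAut_iff.mpr hh))

lemma isTreeAut_one : IsTreeAut (1 : Equiv.Perm (Vertex d)) :=
  mem_treeAut_iff.mp (treeAut d).one_mem

lemma IsTreeAut.drop_app {g : Equiv.Perm (Vertex d)} (hg : IsTreeAut g) (v w : Vertex d) :
    g (v ++ w) = g v ++ (g (v ++ w)).drop v.length := by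
  obtain ⟨t, ht⟩ := hg.2 v w
  rw [← ht]
  congr 1
  rw [← hg.1 v, List.drop_left]

lemma stfun_bijective {g : Equiv.Perm (Vertex d)} (hg : IsTreeAut g) (v : Vertex d) :
    Function.Bijective (fun w : Vertex d => (g (v ++ w)).drop v.length) := by
  constructor
  · intro w₁ w₂ h
    have h1 := hg.drop_app v w₁
    have h2 := hg.drop_app v w₂
    simp only at h
    rw [h] at h1
    have : g (v ++ w₁) = g (v ++ w₂) := by rw [h1, ← h2]
    exact List.append_cancel_left (g.injective this)
  · intro u
    have hginv := hg.inv'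
    obtain ⟨t, ht⟩ := hginv.2 (g v) u
    rw [perm_inv_apply_self'] at ht
    refine ⟨t, ?_⟩
    have hgv : g (v ++ t) = g v ++ u := by
      rw [ht, perm_apply_inv_self']
    simp only [hgv]
    rw [← hg.1 v, List.drop_left]

lemma state_apply {g : Equiv.Perm (Vertex d)} (hg : IsTreeAut g) (v w : Vertex d) :
    state g v w = (g (v ++ w)).drop v.length := by
  rw [state, dif_pos (stfun_bijective hg v)]
  rfl

lemma IsTreeAut.apply_append {g : Equiv.Perm (Vertex d)} (hg : IsTreeAut g) (v w : Vertex d) :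
    g (v ++ w) = g v ++ state g v w := by
  rw [state_apply hg]
  exact hg.drop_app v w

lemma IsTreeAut.state' {g : Equiv.Perm (Vertex d)} (hg : IsTreeAut g) (v : Vertex d) :
    IsTreeAut (state g v) := by
  constructor
  · intro w
    rw [state_apply hg, List.length_drop, hg.1, List.length_append]
    omega
  · intro u w
    obtain ⟨t, ht⟩ := hg.2 (v ++ u) w
    rw [hg.apply_append v u, List.append_assoc, List.append_assoc v u w,
      hg.apply_append v (u ++ w)] at ht
    exact ⟨t, List.append_cancel_left ht⟩

lemma state_nil (g : Equiv.Perm (Vertex d)) : state g [] = g := by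
  have hb : Function.Bijective
      (fun w : Vertex d => (g (([] : Vertex d) ++ w)).drop ([] : Vertex d).length) := by
    simpa using g.bijective
  rw [state, dif_pos hb]
  refine Equiv.ext fun w => ?_
  show (g (([] : Vertex d) ++ w)).drop ([] : Vertex d).length = g w
  simp

lemma state_one (v : Vertex d) : state (1 : Equiv.Perm (Vertex d)) v = 1 := by
  refine Equiv.ext fun w => ?_
  rw [state_apply isTreeAut_one]
  show ((1 : Equiv.Perm (Vertex d)) (v ++ w)).drop v.length = w
  simp [List.drop_left]

lemma state_mul {g h : Equiv.Perm (Vertex d)} (hg : IsTreeAut g) (hh : IsTreeAut h)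
    (v : Vertex d) : state (g * h) v = state g (h v) * state h v := by
  refine Equiv.ext fun w => ?_
  have hgh : IsTreeAut (g * h) := hg.mul' hh
  have h1 := hgh.apply_append v w
  rw [Equiv.Perm.mul_apply, Equiv.Perm.mul_apply, hh.apply_append v w,
    hg.apply_append (h v) (state h v w)] at h1
  have := List.append_cancel_left h1
  rw [Equiv.Perm.mul_apply]
  exact this.symm

lemma state_append {g : Equiv.Perm (Vertex d)} (hg : IsTreeAut g) (u v : Vertex d) :
    state g (u ++ v) = state (state g u) v := by
  refine Equiv.ext fun w => ?_
  rw [state_apply hg, state_apply (hg.state' u), state_apply hg, List.drop_drop,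
    List.length_append, ← List.append_assoc]

lemma state_inv {g : Equiv.Perm (Vertex d)} (hg : IsTreeAut g) (v : Vertex d) :
    state g⁻¹ (g v) = (state g v)⁻¹ := by
  have h1 : state (g⁻¹ * g) v = state g⁻¹ (g v) * state g v := state_mul hg.inv' hg v
  rw [inv_mul_cancel, state_one] at h1
  exact eq_inv_of_mul_eq_one_left h1.symm

lemma IsTreeAut.apply_singleton {g : Equiv.Perm (Vertex d)} (hg : IsTreeAut g) (x : Fin d) :
    ∃ y : Fin d, g [x] = [y] := by
  have h1 : (g [x]).length = 1 := hg.1 [x]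
  exact List.length_eq_one_iff.mp h1

lemma range_state_finite {G : Subgroup (Equiv.Perm (Vertex d))} (hc : ContractingGroup G)
    {g : Equiv.Perm (Vertex d)} (hg : g ∈ G) :
    (Set.range fun v : Vertex d => state g v).Finite := by
  obtain ⟨N, hNfin, -, hN⟩ := hc
  obtain ⟨n, hn⟩ := hN g hg
  have hsub : (Set.range fun v : Vertex d => state g v) ⊆
      ((fun v : Vertex d => state g v) '' {v : Vertex d | v.length < n}) ∪ N := by
    rintro s ⟨v, rfl⟩
    rcases lt_or_ge v.length n with h | h
    · exact Or.inl ⟨v, h, rfl⟩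
    · exact Or.inr (hn v h)
  exact (((List.finite_length_lt (Fin d) n).image _).union hNfin).subset hsub

/-- Products of at most `m` elements of `S`. -/
def prodSet {d : ℕ} (S : Set (Equiv.Perm (Vertex d))) : ℕ → Set (Equiv.Perm (Vertex d))
  | 0 => {1}
  | m + 1 => prodSet S m ∪ Set.image2 (· * ·) S (prodSet S m)

variable {S : Set (Equiv.Perm (Vertex d))}

lemma prodSet_succ (m : ℕ) :
    prodSet S (m + 1) = prodSet S m ∪ Set.image2 (· * ·) S (prodSet S m) := rfl

lemma one_mem_prodSet : ∀ m, (1 : Equiv.Perm (Vertex d)) ∈ prodSet S m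
  | 0 => rfl
  | m + 1 => Or.inl (one_mem_prodSet m)

lemma prodSet_mono_succ (m : ℕ) : prodSet S m ⊆ prodSet S (m + 1) :=
  Set.subset_union_left

lemma prodSet_mono {m m' : ℕ} (h : m ≤ m') : prodSet S m ⊆ prodSet S m' := by
  induction h with
  | refl => exact subset_rfl
  | step _ ih => exact ih.trans (prodSet_mono_succ _)

lemma mul_mem_prodSet {s p : Equiv.Perm (Vertex d)} {m : ℕ} (hs : s ∈ S)
    (hp : p ∈ prodSet S m) : s * p ∈ prodSet S (m + 1) :=
  Or.inr (Set.mem_image2_of_mem hs hp)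

lemma mem_prodSet_of_mem {s : Equiv.Perm (Vertex d)} (hs : s ∈ S) (m : ℕ) :
    s ∈ prodSet S (m + 1) := by
  have := mul_mem_prodSet hs (one_mem_prodSet (S := S) m)
  rwa [mul_one] at this

lemma prodSet_subset {G : Subgroup (Equiv.Perm (Vertex d))} (hSG : S ⊆ (G : Set _)) :
    ∀ m, prodSet S m ⊆ (G : Set _)
  | 0 => by
    intro p hp
    rw [Set.mem_singleton_iff.mp hp]
    exact G.one_mem
  | m + 1 => by
    rintro p (hp | hp)
    · exact prodSet_subset hSG m hp
    · obtain ⟨s, hs, q, hq, rfl⟩ := hp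
      exact G.mul_mem (hSG hs) (prodSet_subset hSG m hq)

lemma prodSet_finite (hS : S.Finite) : ∀ m, (prodSet S m).Finite
  | 0 => Set.finite_singleton 1
  | m + 1 => (prodSet_finite hS m).union (hS.image2 _ (prodSet_finite hS m))

lemma prodSet_mul_right {p s : Equiv.Perm (Vertex d)} (hs : s ∈ S) :
    ∀ m, p ∈ prodSet S m → p * s ∈ prodSet S (m + 1)
  | 0, hp => by
    rw [Set.mem_singleton_iff.mp hp, one_mul]
    exact mem_prodSet_of_mem hs 0
  | m + 1, hp => by
    rcases hp with hp | hp
    · exact prodSet_mono_succ _ (prodSet_mul_right hs m hp)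
    · obtain ⟨t, ht, q, hq, rfl⟩ := hp
      have := prodSet_mul_right hs m hq
      show t * q * s ∈ _
      rw [mul_assoc]
      exact mul_mem_prodSet ht this

lemma prodSet_mul_prodSet {p q : Equiv.Perm (Vertex d)} {b : ℕ} :
    ∀ a, p ∈ prodSet S a → q ∈ prodSet S b → p * q ∈ prodSet S (a + b)
  | 0, hp, hq => by
    rw [Set.mem_singleton_iff.mp hp, one_mul, Nat.zero_add]
    exact hq
  | a + 1, hp, hq => by
    rcases hp with hp | hp
    · exact prodSet_mono (by omega) (prodSet_mul_prodSet a hp hq)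
    · obtain ⟨s, hs, r, hr, rfl⟩ := hp
      have := mul_mem_prodSet hs (prodSet_mul_prodSet a hr hq)
      show s * r * q ∈ _
      rw [mul_assoc]
      have heq : a + b + 1 = a + 1 + b := by omega
      rwa [← heq]

lemma state_mem_prodSet {G : Subgroup (Equiv.Perm (Vertex d))} (hGt : G ≤ treeAut d)
    (hSG : S ⊆ (G : Set _)) (hSst : ∀ s ∈ S, ∀ v : Vertex d, state s v ∈ S) :
    ∀ m (p : Equiv.Perm (Vertex d)) (v : Vertex d), p ∈ prodSet S m →
      state p v ∈ prodSet S m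
  | 0, p, v, hp => by
    rw [Set.mem_singleton_iff.mp hp, state_one]
    exact rfl
  | m + 1, p, v, hp => by
    rcases hp with hp | hp
    · exact prodSet_mono_succ _ (state_mem_prodSet hGt hSG hSst m p v hp)
    · obtain ⟨s, hs, q, hq, rfl⟩ := hp
      have hst : IsTreeAut s := mem_treeAut_iff.mp (hGt (hSG hs))
      have hqt : IsTreeAut q := mem_treeAut_iff.mp (hGt (prodSet_subset hSG m hq))
      show state (s * q) v ∈ _
      rw [state_mul hst hqt]
      exact mul_mem_prodSet (hSst s hs (q v)) (state_mem_prodSet hGt hSG hSst m q v hq)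

lemma state_mem_prodSet_half {G : Subgroup (Equiv.Perm (Vertex d))} {L : ℕ}
    (hGt : G ≤ treeAut d) (hSG : S ⊆ (G : Set _))
    (hSst : ∀ s ∈ S, ∀ v : Vertex d, state s v ∈ S)
    (hL : ∀ s ∈ S, ∀ t ∈ S, ∀ v : Vertex d, L ≤ v.length → state (s * t) v ∈ S) :
    ∀ m (p : Equiv.Perm (Vertex d)) (v : Vertex d), p ∈ prodSet S m → L ≤ v.length →
      state p v ∈ prodSet S ((m + 1) / 2) := by
  intro m
  induction m using Nat.strong_induction_on with
  | _ m ih =>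
    match m with
    | 0 =>
      intro p v hp _
      rw [Set.mem_singleton_iff.mp hp, state_one]
      exact one_mem_prodSet _
    | 1 =>
      intro p v hp hv
      rcases hp with hp | hp
      · rw [Set.mem_singleton_iff.mp hp, state_one]
        exact one_mem_prodSet _
      · obtain ⟨s, hs, q, hq, rfl⟩ := hp
        show state (s * q) v ∈ _
        rw [Set.mem_singleton_iff.mp hq, mul_one]
        exact mem_prodSet_of_mem (hSst s hs v) 0
    | (m + 2) =>
      intro p v hp hv
      rcases hp with hp | hp
      · have h1 := ih (m + 1) (by omega) p v hp hv
        exact prodSet_mono (by omega) h1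
      · obtain ⟨s, hs, q, hq, rfl⟩ := hp
        rcases hq with hq | hq
        · -- q ∈ prodSet S m : peel one
          have hst : IsTreeAut s := mem_treeAut_iff.mp (hGt (hSG hs))
          have hqt : IsTreeAut q := mem_treeAut_iff.mp (hGt (prodSet_subset hSG m hq))
          have h1 := ih m (by omega) q v hq hv
          show state (s * q) v ∈ _
          rw [state_mul hst hqt]
          have h2 := mul_mem_prodSet (hSst s hs (q v)) h1
          have heq : (m + 1) / 2 + 1 = (m + 2 + 1) / 2 := by omega
          rwa [heq] at h2
        · -- q = t * q' : pair s and t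
          obtain ⟨t, ht, q', hq', rfl⟩ := hq
          have hstt : IsTreeAut (s * t) :=
            mem_treeAut_iff.mp (hGt (G.mul_mem (hSG hs) (hSG ht)))
          have hq't : IsTreeAut q' := mem_treeAut_iff.mp (hGt (prodSet_subset hSG m hq'))
          have hlen : (q' v).length = v.length := hq't.1 v
          have hpair : state (s * t) (q' v) ∈ S :=
            hL s hs t ht (q' v) (by omega)
          have h1 := ih m (by omega) q' v hq' hv
          show state (s * (t * q')) v ∈ _
          rw [show s * (t * q') = (s * t) * q' from (mul_assoc s t q').symm,
            state_mul hstt hq't]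
          have h2 := mul_mem_prodSet hpair h1
          have heq : (m + 1) / 2 + 1 = (m + 2 + 1) / 2 := by omega
          rwa [heq] at h2

lemma machine {d : ℕ} (G : Subgroup (Equiv.Perm (Vertex d))) (hGt : G ≤ treeAut d)
    (hss : SelfSimilar G) (hc : ContractingGroup G)
    (H : Set (Equiv.Perm (Vertex d))) (hH : H.Finite) (hHG : H ⊆ (G : Set _)) :
    ∃ (S : Set (Equiv.Perm (Vertex d))) (L : ℕ),
      S.Finite ∧ S ⊆ (G : Set _) ∧ H ⊆ S ∧
      (∀ s ∈ S, ∀ v : Vertex d, state s v ∈ S) ∧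
      (∀ s ∈ S, ∀ t ∈ S, ∀ v : Vertex d, L ≤ v.length → state (s * t) v ∈ S) := by
  obtain ⟨N, hNfin, hNG, hN⟩ := hc
  set S : Set (Equiv.Perm (Vertex d)) :=
    ⋃ g ∈ N ∪ H, Set.range fun v : Vertex d => state g v with hSdef
  have hNHG : ∀ g ∈ N ∪ H, g ∈ G := by
    rintro g (hg | hg)
    · exact hNG hg
    · exact hHG hg
  have hmemS : ∀ {s : Equiv.Perm (Vertex d)},
      s ∈ S ↔ ∃ g ∈ N ∪ H, ∃ v : Vertex d, state g v = s := by
    intro s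
    simp [hSdef, Set.mem_iUnion]
  have hSfin : S.Finite :=
    (hNfin.union hH).biUnion fun g hg => range_state_finite ⟨N, hNfin, hNG, hN⟩ (hNHG g hg)
  have hSG : S ⊆ (G : Set _) := by
    intro s hs
    obtain ⟨g, hg, v, rfl⟩ := hmemS.mp hs
    exact hss g (hNHG g hg) v
  have hHS : H ⊆ S := by
    intro h hh
    exact hmemS.mpr ⟨h, Or.inr hh, [], state_nil h⟩
  have hNS : N ⊆ S := by
    intro h hh
    exact hmemS.mpr ⟨h, Or.inl hh, [], state_nil h⟩
  have hSst : ∀ s ∈ S, ∀ v : Vertex d, state s v ∈ S := by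
    intro s hs v
    obtain ⟨g, hg, u, rfl⟩ := hmemS.mp hs
    have hgt : IsTreeAut g := mem_treeAut_iff.mp (hGt (hNHG g hg))
    rw [← state_append hgt]
    exact hmemS.mpr ⟨g, hg, u ++ v, rfl⟩
  have hpair : ∀ p : Equiv.Perm (Vertex d) × Equiv.Perm (Vertex d), ∃ n : ℕ,
      p.1 ∈ S → p.2 ∈ S → ∀ v : Vertex d, n ≤ v.length → state (p.1 * p.2) v ∈ N := by
    intro p
    by_cases hp : p.1 ∈ S ∧ p.2 ∈ S
    · obtain ⟨n, hn⟩ := hN (p.1 * p.2) (G.mul_mem (hSG hp.1) (hSG hp.2))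
      exact ⟨n, fun _ _ => hn⟩
    · exact ⟨0, fun h1 h2 => absurd ⟨h1, h2⟩ hp⟩
  choose nf hnf using hpair
  refine ⟨S, (hSfin.toFinset ×ˢ hSfin.toFinset).sup nf, hSfin, hSG, hHS, hSst, ?_⟩
  intro s hs t ht v hv
  have hle : nf (s, t) ≤ (hSfin.toFinset ×ˢ hSfin.toFinset).sup nf :=
    Finset.le_sup (Finset.mem_product.mpr ⟨hSfin.mem_toFinset.mpr hs, hSfin.mem_toFinset.mpr ht⟩)
  exact hNS (hnf (s, t) hs ht v (le_trans hle hv))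

end Aux

/-- Let `F` be a finite set of automorphisms of `T`.  Suppose
there are contracting self-similar subgroups `G₁, G₂` of `Aut(T)` and finite
subsets `H₁ ⊆ G₁`, `H₂ ⊆ G₂` such that every first-level state of every `g ∈ F`
has the form `h₁·g'·h₂` (in the left-action convention, `h₂ * g' * h₁`) with
`h₁ ∈ H₁`, `h₂ ∈ H₂`, `g' ∈ F`.  Then every automorphism in `F` is
finite-state. -/
theorem finiteState_of_selfRecursion_with_contracting_coefficients
    (d : ℕ) (hd : 2 ≤ d)
    (F : Set (Equiv.Perm (Vertex d))) (hF : F.Finite) (hFaut : ∀ g ∈ F, IsTreeAut g)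
    (G₁ G₂ : Subgroup (Equiv.Perm (Vertex d)))
    (hG₁ : G₁ ≤ treeAut d) (hss₁ : SelfSimilar G₁) (hc₁ : ContractingGroup G₁)
    (hG₂ : G₂ ≤ treeAut d) (hss₂ : SelfSimilar G₂) (hc₂ : ContractingGroup G₂)
    (H₁ H₂ : Set (Equiv.Perm (Vertex d))) (hH₁ : H₁.Finite) (hH₂ : H₂.Finite)
    (hH₁G : H₁ ⊆ (G₁ : Set _)) (hH₂G : H₂ ⊆ (G₂ : Set _))
    (hrec : ∀ g ∈ F, ∀ x : Fin d, ∃ h₁ ∈ H₁, ∃ h₂ ∈ H₂, ∃ g' ∈ F,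
      state g ([x] : Vertex d) = h₂ * g' * h₁) :
    ∀ g ∈ F, FiniteState g := by
  obtain ⟨S₂, L₂, hS₂fin, hS₂G, hH₂S, hS₂st, hL₂⟩ := machine G₂ hG₂ hss₂ hc₂ H₂ hH₂ hH₂G
  have hH₁invG : (H₁⁻¹ : Set _) ⊆ (G₁ : Set _) := by
    intro a ha
    have h1 : a⁻¹ ∈ G₁ := hH₁G (Set.mem_inv.mp ha)
    simpa using G₁.inv_mem h1
  obtain ⟨S₁, L₁, hS₁fin, hS₁G, hH₁S, hS₁st, hL₁⟩ :=
    machine G₁ hG₁ hss₁ hc₁ H₁⁻¹ hH₁.inv hH₁invG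
  set L : ℕ := max 1 (max L₁ L₂) with hLdef
  have hL1 : 1 ≤ L := le_max_left _ _
  have hL₂' : ∀ s ∈ S₂, ∀ t ∈ S₂, ∀ v : Vertex d, L ≤ v.length → state (s * t) v ∈ S₂ := by
    intro s hs t ht v hv
    exact hL₂ s hs t ht v (le_trans (le_trans (le_max_right _ _) (le_max_right 1 _)) hv)
  have hL₁' : ∀ s ∈ S₁, ∀ t ∈ S₁, ∀ v : Vertex d, L ≤ v.length → state (s * t) v ∈ S₁ := by
    intro s hs t ht v hv
    exact hL₁ s hs t ht v (le_trans (le_trans (le_max_left _ _) (le_max_right 1 _)) hv)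
  have t₂ : ∀ {c : Equiv.Perm (Vertex d)}, c ∈ G₂ → IsTreeAut c :=
    fun hc => mem_treeAut_iff.mp (hG₂ hc)
  have t₁ : ∀ {c : Equiv.Perm (Vertex d)}, c ∈ G₁ → IsTreeAut c :=
    fun hc => mem_treeAut_iff.mp (hG₁ hc)
  have tF : ∀ {f : Equiv.Perm (Vertex d)}, f ∈ F → IsTreeAut f := fun hf => hFaut _ hf
  -- Block Lemma
  have BL : ∀ w : Vertex d, ∀ f c ρ : Equiv.Perm (Vertex d), f ∈ F → c ∈ G₂ → ρ ∈ G₁ →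
      ∃ f' ∈ F, ∃ e ∈ prodSet S₂ w.length, ∃ e₁ ∈ prodSet S₁ w.length,
      ∃ w₂ w₁ : Vertex d, w₂.length = w.length ∧ w₁.length = w.length ∧
        state (c * f * ρ⁻¹) w = (state c w₂ * e) * f' * (state ρ w₁ * e₁)⁻¹ := by
    intro w
    induction w with
    | nil =>
      intro f c ρ hf hcG hρG
      refine ⟨f, hf, 1, one_mem_prodSet _, 1, one_mem_prodSet _, [], [], rfl, rfl, ?_⟩
      simp [state_nil]
    | cons x w' ihw =>
      intro f c ρ hf hcG hρG
      have hct : IsTreeAut c := t₂ hcG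
      have hρt : IsTreeAut ρ := t₁ hρG
      have hft : IsTreeAut f := tF hf
      have hcfρt : IsTreeAut (c * f * ρ⁻¹) := (hct.mul' hft).mul' hρt.inv'
      obtain ⟨x', hx'⟩ := hρt.inv'.apply_singleton x
      obtain ⟨h₁, hh₁, h₂, hh₂, f', hf', hrec'⟩ := hrec f hf x'
      obtain ⟨z, hz⟩ := hft.apply_singleton x'
      have hh₁G : h₁ ∈ G₁ := hH₁G hh₁
      have hh₂G : h₂ ∈ G₂ := hH₂G hh₂
      have hh₁invS : h₁⁻¹ ∈ S₁ := hH₁S (by rw [Set.mem_inv, inv_inv]; exact hh₁)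
      -- the first-level state
      have key1 : state (c * f * ρ⁻¹) [x]
          = (state c [z] * h₂) * f' * (state ρ [x'] * h₁⁻¹)⁻¹ := by
        have e1 : state (c * f * ρ⁻¹) [x] = state (c * f) (ρ⁻¹ [x]) * state ρ⁻¹ [x] :=
          state_mul (hct.mul' hft) hρt.inv' [x]
        have e3 : state ρ⁻¹ [x] = (state ρ [x'])⁻¹ := by
          have hxx : ([x] : Vertex d) = ρ [x'] := by rw [← hx', perm_apply_inv_self']
          rw [hxx, state_inv hρt]
        rw [e1, hx', state_mul hct hft, hz, e3, hrec']
        group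
      have hC₁ : state c [z] * h₂ ∈ G₂ := G₂.mul_mem (hss₂ c hcG [z]) hh₂G
      have hR₁ : state ρ [x'] * h₁⁻¹ ∈ G₁ := G₁.mul_mem (hss₁ ρ hρG [x']) (G₁.inv_mem hh₁G)
      obtain ⟨f'', hf'', e, he, e₁, he₁, w₂', w₁', hw₂len, hw₁len, heq⟩ :=
        ihw f' (state c [z] * h₂) (state ρ [x'] * h₁⁻¹) hf' hC₁ hR₁
      have split : state (c * f * ρ⁻¹) (x :: w') = state (state (c * f * ρ⁻¹) [x]) w' := by
        rw [show (x :: w' : Vertex d) = [x] ++ w' from rfl, state_append hcfρt]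
      -- expansions
      have exp₂ : state (state c [z] * h₂) w₂'
          = state c ([z] ++ h₂ w₂') * state h₂ w₂' := by
        rw [state_mul (hct.state' [z]) (t₂ hh₂G), ← state_append hct]
      have exp₁ : state (state ρ [x'] * h₁⁻¹) w₁'
          = state ρ ([x'] ++ h₁⁻¹ w₁') * state h₁⁻¹ w₁' := by
        rw [state_mul (hρt.state' [x']) (t₁ (G₁.inv_mem hh₁G)), ← state_append hρt]
      refine ⟨f'', hf'', state h₂ w₂' * e, ?_, state h₁⁻¹ w₁' * e₁, ?_,
        [z] ++ h₂ w₂', [x'] ++ h₁⁻¹ w₁', ?_, ?_, ?_⟩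
      · simpa [List.length_cons] using mul_mem_prodSet (hS₂st h₂ (hH₂S hh₂) w₂') he
      · simpa [List.length_cons] using mul_mem_prodSet (hS₁st h₁⁻¹ hh₁invS w₁') he₁
      · have hlen2 : (h₂ w₂').length = w'.length := by
          rw [(t₂ hh₂G).1 w₂']; exact hw₂len
        simp only [List.length_append, List.length_cons, List.length_nil, hlen2]
        omega
      · have hlen1 : (h₁⁻¹ w₁').length = w'.length := by
          rw [(t₁ (G₁.inv_mem hh₁G)).1 w₁']; exact hw₁len
        simp only [List.length_append, List.length_cons, List.length_nil, hlen1]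
        omega
      · rw [split, key1, heq, exp₂, exp₁]
        simp [mul_assoc]
  -- key decomposition of all states of elements of F
  have KEY : ∀ g ∈ F, ∀ n : ℕ, ∀ v : Vertex d, v.length = n →
      ∃ f ∈ F, ∃ cc ∈ prodSet S₂ (2 * L), ∃ ρ ∈ prodSet S₁ (2 * L),
        state g v = cc * f * ρ⁻¹ := by
    intro g hg n
    induction n using Nat.strong_induction_on with
    | _ n ih =>
      intro v hv
      rcases le_or_gt L n with hLn | hnL
      · -- long words: split off a block of length L at the end
        have hsplit : v = v.take (n - L) ++ v.drop (n - L) := (List.take_append_drop _ _).symm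
        have hlen_take : (v.take (n - L)).length = n - L := by
          rw [List.length_take, hv]; omega
        have hlen_drop : (v.drop (n - L)).length = L := by
          rw [List.length_drop, hv]; omega
        obtain ⟨f', hf', c', hc', ρ', hρ', hdec⟩ :=
          ih (n - L) (by omega) (v.take (n - L)) hlen_take
        obtain ⟨f'', hf'', e, he, e₁, he₁, w₂, w₁, hw₂, hw₁, heq⟩ :=
          BL (v.drop (n - L)) f' c' ρ' hf' (prodSet_subset hS₂G _ hc') (prodSet_subset hS₁G _ hρ')
        rw [hlen_drop] at he he₁ hw₂ hw₁
        have hcnew : state c' w₂ * e ∈ prodSet S₂ (2 * L) := by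
          have h1 := state_mem_prodSet_half hG₂ hS₂G hS₂st hL₂' (2 * L) c' w₂ hc'
            (le_of_eq hw₂.symm)
          rw [show (2 * L + 1) / 2 = L from by omega] at h1
          have := prodSet_mul_prodSet _ h1 he
          rwa [show L + L = 2 * L from by omega] at this
        have hρnew : state ρ' w₁ * e₁ ∈ prodSet S₁ (2 * L) := by
          have h1 := state_mem_prodSet_half hG₁ hS₁G hS₁st hL₁' (2 * L) ρ' w₁ hρ'
            (le_of_eq hw₁.symm)
          rw [show (2 * L + 1) / 2 = L from by omega] at h1
          have := prodSet_mul_prodSet _ h1 he₁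
          rwa [show L + L = 2 * L from by omega] at this
        refine ⟨f'', hf'', state c' w₂ * e, hcnew, state ρ' w₁ * e₁, hρnew, ?_⟩
        calc state g v = state (state g (v.take (n - L))) (v.drop (n - L)) := by
              conv_lhs => rw [hsplit]
              exact state_append (hFaut g hg) _ _
          _ = (state c' w₂ * e) * f'' * (state ρ' w₁ * e₁)⁻¹ := by rw [hdec, heq]
      · -- short words
        obtain ⟨f'', hf'', e, he, e₁, he₁, w₂, w₁, hw₂, hw₁, heq⟩ :=
          BL v g 1 1 hg G₂.one_mem G₁.one_mem
        simp only [one_mul, inv_one, mul_one, state_one] at heq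
        refine ⟨f'', hf'', e, prodSet_mono (by omega) (hv ▸ he), e₁,
          prodSet_mono (by omega) (hv ▸ he₁), ?_⟩
        rw [heq]
  intro g hg
  show (Set.range fun v : Vertex d => state g v).Finite
  have hsub : (Set.range fun v : Vertex d => state g v) ⊆
      Set.image2 (· * ·) (Set.image2 (· * ·) (prodSet S₂ (2 * L)) F) ((prodSet S₁ (2 * L))⁻¹) := by
    rintro s ⟨v, rfl⟩
    obtain ⟨f, hf, cc, hcc, ρ, hρ, hdec⟩ := KEY g hg v.length v rfl
    simp only [hdec]
    exact Set.mem_image2_of_mem (Set.mem_image2_of_mem hcc hf) (by rw [Set.mem_inv, inv_inv]; exact hρ)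
  exact Set.Finite.subset
    (Set.Finite.image2 _ (Set.Finite.image2 _ (prodSet_finite hS₂fin _) hF)
      ((prodSet_finite hS₁fin _).inv)) hsub
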